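/- Fix λ > 0, α > 0, θ > 0 and γ ∈ (0,1), and let μ₁ be the measure on {(r₀,r₁) ∈ ℝ² : 0 < r₀ < r₁} with density (2πλ)² r₀ r₁ exp(−πλ r₁²) with respect to Lebesgue measure. Then μ₁ of the event {(r₀,r₁) : (1 + θ r₀^α r₁^{−α})^{−1} > γ} equals min(1, ((1−γ)/(γθ))^{2/α}). -/

import Mathlib

open MeasureTheory Real Set Filter Topology

lemma aux_exp_half : Tendsto (fun x : ℝ => Real.exp (-(1/2) * x)) atTop (𝓝 0) := by
  have h : Tendsto (fun x : ℝ => -(1/2) * x) atTop atBot :=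
    tendsto_id.const_mul_atTop_of_neg (by norm_num)
  exact Real.tendsto_exp_atBot.comp h

lemma aux_tendsto_cube {b : ℝ} (hb : 0 < b) :
    Tendsto (fun x : ℝ => -(x^2/(2*b) + 1/(2*b^2)) * Real.exp (-(b*x^2))) atTop (𝓝 0) := by
  have h2 : Tendsto (fun x : ℝ => x ^ (2:ℝ) * Real.exp (-b * x^2)) atTop (𝓝 0) :=
    (rpow_mul_exp_neg_mul_sq_isLittleO_exp_neg hb 2).tendsto_zero_of_tendsto aux_exp_half
  have h0 : Tendsto (fun x : ℝ => x ^ (0:ℝ) * Real.exp (-b * x^2)) atTop (𝓝 0) :=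
    (rpow_mul_exp_neg_mul_sq_isLittleO_exp_neg hb 0).tendsto_zero_of_tendsto aux_exp_half
  have h := ((h2.const_mul (1/(2*b))).add (h0.const_mul (1/(2*b^2)))).neg
  rw [show -((1/(2*b)) * 0 + (1/(2*b^2)) * 0) = 0 by ring] at h
  refine h.congr' ?_
  filter_upwards [eventually_gt_atTop (0:ℝ)] with x hx
  rw [Real.rpow_two, Real.rpow_zero]
  ring_nf

lemma aux_integrableOn_cube {b : ℝ} (hb : 0 < b) :
    IntegrableOn (fun x : ℝ => x ^ 3 * Real.exp (-(b * x ^ 2))) (Ioi 0) := by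
  have h := integrableOn_rpow_mul_exp_neg_mul_sq hb (s := 3) (by norm_num)
  refine h.congr_fun (fun x hx => ?_) measurableSet_Ioi
  beta_reduce
  rw [show (3:ℝ) = ((3:ℕ):ℝ) by norm_num, Real.rpow_natCast, neg_mul]

lemma aux_integral_cube {b : ℝ} (hb : 0 < b) :
    ∫ x in Ioi (0:ℝ), x ^ 3 * Real.exp (-(b * x ^ 2)) = 1 / (2 * b ^ 2) := by
  have hderiv : ∀ x ∈ Ici (0:ℝ), HasDerivAt
      (fun x : ℝ => -(x^2/(2*b) + 1/(2*b^2)) * Real.exp (-(b*x^2)))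
      (x ^ 3 * Real.exp (-(b * x ^ 2))) x := by
    intro x _
    have h1 : HasDerivAt (fun x : ℝ => -(x^2/(2*b) + 1/(2*b^2)))
        (-(2*x/(2*b))) x := by
      have := (((hasDerivAt_pow 2 x).div_const (2*b)).add_const (1/(2*b^2))).neg
      exact this.congr_deriv (by norm_num)
    have h2 : HasDerivAt (fun x : ℝ => Real.exp (-(b*x^2)))
        (Real.exp (-(b*x^2)) * (-(b*(2*x)))) x := by
      have hin : HasDerivAt (fun x : ℝ => -(b*x^2)) (-(b*(2*x))) x := by
        have := ((hasDerivAt_pow 2 x).const_mul b).neg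
        exact this.congr_deriv (by norm_num)
      exact hin.exp
    have h3 := h1.mul h2
    refine h3.congr_deriv ?_
    have hb0 : b ≠ 0 := hb.ne'
    field_simp
    ring
  rw [integral_Ioi_of_hasDerivAt_of_tendsto' hderiv
    (aux_integrableOn_cube hb) (aux_tendsto_cube hb)]
  norm_num


/-- Nearest-interferer-only closed form (Remark 2): with `μ₁` the joint law of the distances
`(R₀, R₁)` to the two nearest points of a planar PPP of intensity `λ` (density
`(2πλ)² r₀ r₁ e^{−πλ r₁²}` on `{0 < r₀ < r₁}`), the `μ₁`-measure of the event
`(1 + θ r₀^α r₁^{−α})⁻¹ > γ` equals `min(1, ((1−γ)/(γθ))^{2/α})`. -/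
theorem stmt8 (lam α θ γ : ℝ)
    (hlam : 0 < lam) (hα : 0 < α) (hθ : 0 < θ) (hγ0 : 0 < γ) (hγ1 : γ < 1) :
    (Measure.withDensity
        ((volume : Measure (ℝ × ℝ)).restrict {p : ℝ × ℝ | 0 < p.1 ∧ p.1 < p.2})
        fun p => ENNReal.ofReal
          ((2 * π * lam) ^ 2 * p.1 * p.2 * Real.exp (-(π * lam * p.2 ^ 2))))
      {p : ℝ × ℝ | γ < (1 + θ * p.1 ^ α * p.2 ^ (-α))⁻¹}
      = ENNReal.ofReal (min 1 (((1 - γ) / (γ * θ)) ^ (2 / α))) := by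
  set c : ℝ := (1 - γ) / (γ * θ) with hc_def
  have hc : 0 < c := div_pos (by linarith) (by positivity)
  set d : ℝ := c ^ (1/α) with hd_def
  have hd : 0 < d := Real.rpow_pos_of_pos hc _
  set κ : ℝ := min 1 d with hκ_def
  have hκ0 : 0 < κ := lt_min one_pos hd
  have hκ1 : κ ≤ 1 := min_le_left _ _
  set C : ℝ := (2 * π * lam) ^ 2 with hC_def
  have hC : 0 < C := by positivity
  set b : ℝ := π * lam with hb_def
  have hb : 0 < b := by positivity
  -- the key pointwise equivalence
  have hiff : ∀ r0 r1 : ℝ, 0 < r0 → r0 < r1 →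
      (γ < (1 + θ * r0 ^ α * r1 ^ (-α))⁻¹ ↔ r0 < d * r1) := by
    intro r0 r1 h0 h01
    have hr1 : 0 < r1 := h0.trans h01
    have hq : 0 < r0 / r1 := div_pos h0 hr1
    have hrw : θ * r0 ^ α * r1 ^ (-α) = θ * (r0/r1) ^ α := by
      rw [Real.rpow_neg hr1.le, Real.div_rpow h0.le hr1.le]; ring
    rw [hrw]
    have hs0 : 0 < (r0/r1) ^ α := Real.rpow_pos_of_pos hq α
    set s : ℝ := (r0/r1) ^ α with hs_def
    have h1s : 0 < 1 + θ * s := by positivity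
    constructor
    · intro h
      have h2 : γ * (1 + θ * s) < 1 := by
        have h3 := mul_lt_mul_of_pos_right h h1s
        rwa [inv_mul_cancel₀ h1s.ne'] at h3
      have hsc : s < c := by
        rw [hc_def, lt_div_iff₀ (by positivity)]
        nlinarith
      have h4 := Real.rpow_lt_rpow hs0.le hsc (by positivity : (0:ℝ) < 1/α)
      rw [hs_def, ← Real.rpow_mul hq.le, mul_one_div, div_self hα.ne',
        Real.rpow_one] at h4
      exact (div_lt_iff₀ hr1).mp h4
    · intro h
      have hqc : r0 / r1 < d := (div_lt_iff₀ hr1).mpr h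
      have hsc : s < c := by
        have h4 := Real.rpow_lt_rpow hq.le hqc hα
        rwa [hd_def, ← Real.rpow_mul hc.le, one_div_mul_cancel hα.ne',
          Real.rpow_one] at h4
      have h2 : γ * (1 + θ * s) < 1 := by
        rw [hc_def, lt_div_iff₀ (by positivity)] at hsc
        nlinarith
      have h3 := mul_lt_mul_of_pos_right h2 (inv_pos.2 h1s)
      rwa [mul_assoc, mul_inv_cancel₀ h1s.ne', mul_one, one_mul] at h3
  -- measurability of the event
  have hE : MeasurableSet {p : ℝ × ℝ | γ < (1 + θ * p.1 ^ α * p.2 ^ (-α))⁻¹} := by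
    have hm : Measurable fun p : ℝ × ℝ => (1 + θ * p.1 ^ α * p.2 ^ (-α))⁻¹ := by
      fun_prop
    exact measurableSet_lt measurable_const hm
  -- rewrite the set
  have hset : {p : ℝ × ℝ | γ < (1 + θ * p.1 ^ α * p.2 ^ (-α))⁻¹} ∩
      {p : ℝ × ℝ | 0 < p.1 ∧ p.1 < p.2}
      = {p : ℝ × ℝ | 0 < p.2 ∧ p.1 ∈ Ioo 0 (κ * p.2)} := by
    ext ⟨r0, r1⟩
    simp only [mem_inter_iff, mem_setOf_eq, mem_Ioo]
    constructor
    · rintro ⟨hγlt, h0, h01⟩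
      have hr1 : 0 < r1 := h0.trans h01
      have hlt := (hiff r0 r1 h0 h01).mp hγlt
      refine ⟨hr1, h0, ?_⟩
      have hmm : κ * r1 = min r1 (d * r1) := by
        rw [hκ_def, min_mul_of_nonneg _ _ hr1.le, one_mul]
      rw [hmm, lt_min_iff]
      exact ⟨h01, hlt⟩
    · rintro ⟨hr1, h0, hκr⟩
      have hdle : κ * r1 ≤ d * r1 :=
        mul_le_mul_of_nonneg_right (min_le_right _ _) hr1.le
      have h1le : κ * r1 ≤ r1 := by nlinarith
      have h01 : r0 < r1 := lt_of_lt_of_le hκr h1le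
      exact ⟨(hiff r0 r1 h0 h01).mpr (lt_of_lt_of_le hκr hdle), h0, h01⟩
  set f : ℝ × ℝ → ENNReal := fun p => ENNReal.ofReal
      (C * p.1 * p.2 * Real.exp (-(b * p.2 ^ 2))) with hf_def
  have hfm : Measurable f := by
    apply ENNReal.measurable_ofReal.comp
    exact (((measurable_const.mul measurable_fst).mul measurable_snd).mul
      ((((measurable_const.mul (measurable_snd.pow_const 2))).neg).exp))
  set S' : Set (ℝ × ℝ) := {p : ℝ × ℝ | 0 < p.2 ∧ p.1 ∈ Ioo 0 (κ * p.2)} with hS'_def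
  have hS' : MeasurableSet S' := by
    have : S' = {p : ℝ × ℝ | 0 < p.2} ∩ ({p | 0 < p.1} ∩ {p | p.1 < κ * p.2}) := by
      ext p; simp [hS'_def, mem_Ioo]
    rw [this]
    exact (measurableSet_lt measurable_const measurable_snd).inter
      ((measurableSet_lt measurable_const measurable_fst).inter
        (measurableSet_lt measurable_fst (measurable_const.mul measurable_snd)))
  rw [withDensity_apply _ hE, Measure.restrict_restrict hE, hset]
  have : ∫⁻ p in S', f p = ∫⁻ (y : ℝ), ∫⁻ (x : ℝ), S'.indicator f (x, y) := by
    rw [← lintegral_indicator hS' _, Measure.volume_eq_prod,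
      lintegral_prod_symm _ (hfm.indicator hS').aemeasurable]
  rw [show (∫⁻ p in S', ENNReal.ofReal
      ((2 * π * lam) ^ 2 * p.1 * p.2 * Real.exp (-(π * lam * p.2 ^ 2))))
      = ∫⁻ p in S', f p from rfl, this]
  set K : ℝ := C * κ ^ 2 / 2 with hK_def
  have key : ∀ y : ℝ, (∫⁻ x, S'.indicator f (x, y))
      = (Ioi (0:ℝ)).indicator
        (fun y => ENNReal.ofReal (K * (y ^ 3 * Real.exp (-(b * y ^ 2))))) y := by
    intro y
    rcases le_or_gt y 0 with hy | hy
    · have h1 : ∀ x : ℝ, S'.indicator f (x, y) = 0 := by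
        intro x
        apply indicator_of_notMem
        simp only [hS'_def, mem_setOf_eq]
        push_neg
        intro h; exact absurd h (not_lt.2 hy)
      simp only [h1, lintegral_zero]
      rw [indicator_of_notMem (by simpa using hy)]
    · have h1 : (fun x => S'.indicator f (x, y))
          = (Ioo 0 (κ * y)).indicator (fun x => f (x, y)) := by
        ext x
        by_cases hx : x ∈ Ioo 0 (κ * y)
        · rw [indicator_of_mem hx, indicator_of_mem]
          exact ⟨hy, hx⟩
        · rw [indicator_of_notMem hx, indicator_of_notMem]
          simp only [hS'_def, mem_setOf_eq]
          exact fun h => hx h.2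
      rw [h1, lintegral_indicator measurableSet_Ioo _]
      have hint : IntegrableOn (fun x : ℝ => C * x * y * Real.exp (-(b * y ^ 2)))
          (Ioo 0 (κ * y)) := by
        exact ((continuous_const.mul continuous_id).mul continuous_const |>.mul
          continuous_const).integrableOn_Icc.mono_set Ioo_subset_Icc_self
      have hnn : 0 ≤ᵐ[volume.restrict (Ioo 0 (κ * y))]
          fun x : ℝ => C * x * y * Real.exp (-(b * y ^ 2)) := by
        filter_upwards [ae_restrict_mem measurableSet_Ioo] with x hx
        have := hx.1
        positivity
      rw [hf_def]
      rw [← ofReal_integral_eq_lintegral_ofReal hint hnn]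
      rw [indicator_of_mem (mem_Ioi.mpr hy)]
      congr 1
      have h2 : (fun x : ℝ => C * x * y * Real.exp (-(b * y ^ 2)))
          = fun x : ℝ => (C * y * Real.exp (-(b * y ^ 2))) * x := by
        ext x; ring
      rw [h2, integral_const_mul]
      have h3 : ∫ x in Ioo 0 (κ * y), x = (κ * y) ^ 2 / 2 := by
        rw [← integral_Ioc_eq_integral_Ioo,
          ← intervalIntegral.integral_of_le (by positivity : (0:ℝ) ≤ κ * y),
          integral_id]
        norm_num
      rw [h3, hK_def]
      ring
  rw [lintegral_congr key, lintegral_indicator measurableSet_Ioi _]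
  have hint2 : IntegrableOn (fun y : ℝ => K * (y ^ 3 * Real.exp (-(b * y ^ 2))))
      (Ioi 0) := (aux_integrableOn_cube hb).const_mul K
  have hnn2 : 0 ≤ᵐ[volume.restrict (Ioi (0:ℝ))]
      fun y : ℝ => K * (y ^ 3 * Real.exp (-(b * y ^ 2))) := by
    filter_upwards [ae_restrict_mem measurableSet_Ioi] with y hy
    have hy0 : (0:ℝ) < y := hy
    have hK0 : 0 ≤ K := by positivity
    positivity
  rw [← ofReal_integral_eq_lintegral_ofReal hint2 hnn2, integral_const_mul,
    aux_integral_cube hb]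
  congr 1
  have hKval : K * (1 / (2 * b ^ 2)) = κ ^ 2 := by
    rw [hK_def, hC_def, hb_def]
    have hπ : π ≠ 0 := pi_ne_zero
    field_simp
  rw [hKval]
  -- κ² = min 1 (c^(2/α))
  have hd2 : d ^ 2 = c ^ (2/α) := by
    rw [hd_def, ← Real.rpow_natCast (c ^ (1/α)) 2, ← Real.rpow_mul hc.le]
    norm_num
    rw [show α⁻¹ * 2 = 2/α by ring]
  rcases le_total 1 d with h | h
  · rw [hκ_def, min_eq_left h, one_pow, min_eq_left]
    rw [← hd2]; nlinarith
  · rw [hκ_def, min_eq_right h, min_eq_right]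
    rw [← hd2]; nlinarith
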